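/- Let (F_n) with F_n : {0,...,n} → ℂ satisfy Σ_j |F_n(j)| ≤ B for all n. If for each fixed k ∈ ℕ the weighted sums Σ_{j=k}^n F_n(j) · [C(n-k, j-k)/C(n,j)] converge to c·p^k as n → ∞ (with c ∈ ℂ, p ∈ [0,1]), then for each k, Σ_{j=0}^n F_n(j)(j/n)^k also converges to c·p^k as n → ∞. -/

import Mathlib

open Finset Filter Topology


lemma abs_prod_sub_prod_le' (s : Finset ℕ) (a b : ℕ → ℝ)
    (ha : ∀ i ∈ s, a i ∈ Set.Icc (0:ℝ) 1) (hb : ∀ i ∈ s, b i ∈ Set.Icc (0:ℝ) 1) :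
    |∏ i ∈ s, a i - ∏ i ∈ s, b i| ≤ ∑ i ∈ s, |a i - b i| := by
  induction s using Finset.cons_induction with
  | empty => simp
  | cons x s hx ih =>
    simp only [prod_cons, sum_cons]
    have hax := ha x (mem_cons_self x s)
    have hbx := hb x (mem_cons_self x s)
    have ha' : ∀ i ∈ s, a i ∈ Set.Icc (0:ℝ) 1 := fun i hi => ha i (mem_cons_of_mem hi)
    have hb' : ∀ i ∈ s, b i ∈ Set.Icc (0:ℝ) 1 := fun i hi => hb i (mem_cons_of_mem hi)
    have hPa : |∏ i ∈ s, a i| ≤ 1 := by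
      rw [abs_of_nonneg (prod_nonneg fun i hi => (ha' i hi).1)]
      exact prod_le_one (fun i hi => (ha' i hi).1) (fun i hi => (ha' i hi).2)
    have key : a x * ∏ i ∈ s, a i - b x * ∏ i ∈ s, b i
        = (a x - b x) * ∏ i ∈ s, a i + b x * (∏ i ∈ s, a i - ∏ i ∈ s, b i) := by ring
    rw [key]
    calc |(a x - b x) * ∏ i ∈ s, a i + b x * (∏ i ∈ s, a i - ∏ i ∈ s, b i)|
        ≤ |(a x - b x) * ∏ i ∈ s, a i| + |b x * (∏ i ∈ s, a i - ∏ i ∈ s, b i)| := abs_add_le _ _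
      _ ≤ |a x - b x| * 1 + 1 * ∑ i ∈ s, |a i - b i| := by
          rw [abs_mul, abs_mul]
          refine add_le_add ?_ ?_
          · exact mul_le_mul_of_nonneg_left hPa (abs_nonneg _)
          · refine mul_le_mul ?_ (ih ha' hb') (abs_nonneg _) zero_le_one
            rw [abs_of_nonneg hbx.1]; exact hbx.2
      _ = |a x - b x| + ∑ i ∈ s, |a i - b i| := by ring

lemma ratio_eq' (n j k : ℕ) (hkj : k ≤ j) (hjn : j ≤ n) :
    ((n - k).choose (j - k) : ℝ) / (n.choose j : ℝ)
      = ∏ i ∈ range k, (((j - i : ℕ) : ℝ) / ((n - i : ℕ) : ℝ)) := by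
  have hkn : k ≤ n := hkj.trans hjn
  have h1 : (n.choose j : ℝ) ≠ 0 := Nat.cast_ne_zero.mpr (Nat.choose_pos hjn).ne'
  have h2 : (n.choose k : ℝ) ≠ 0 := Nat.cast_ne_zero.mpr (Nat.choose_pos hkn).ne'
  have hden : ∀ i ∈ range k, ((n - i : ℕ) : ℝ) ≠ 0 := by
    intro i hi
    have : i < n := lt_of_lt_of_le (mem_range.mp hi) hkn
    exact Nat.cast_ne_zero.mpr (Nat.sub_ne_zero_of_lt this)
  have hprod : ∏ i ∈ range k, (((j - i : ℕ) : ℝ) / ((n - i : ℕ) : ℝ))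
      = ((j.descFactorial k : ℝ)) / ((n.descFactorial k : ℝ)) := by
    rw [prod_div_distrib, Nat.descFactorial_eq_prod_range, Nat.descFactorial_eq_prod_range]
    push_cast
    ring
  rw [hprod, Nat.descFactorial_eq_factorial_mul_choose, Nat.descFactorial_eq_factorial_mul_choose]
  push_cast
  rw [mul_div_mul_left _ _ (by positivity : ((Nat.factorial k : ℕ) : ℝ) ≠ 0)]
  rw [div_eq_div_iff h1 h2]
  have h3 : (n.choose j : ℝ) * (j.choose k : ℝ)
      = (n.choose k : ℝ) * ((n - k).choose (j - k) : ℝ) := by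
    exact_mod_cast congrArg (Nat.cast : ℕ → ℝ) (Nat.choose_mul (n := n) hkj)
  linarith [h3]

lemma est (n j k : ℕ) (hkj : k ≤ j) (hjn : j ≤ n) (hkn : k < n) :
    |((n - k).choose (j - k) : ℝ) / (n.choose j : ℝ) - ((j : ℝ) / n) ^ k|
      ≤ (k ^ 2 : ℝ) / ((n : ℝ) - k) := by
  have hn0 : 0 < n := Nat.lt_of_le_of_lt (Nat.zero_le k) hkn
  have hn : (0:ℝ) < n := by exact_mod_cast hn0
  have hnk : (0:ℝ) < (n:ℝ) - k := by
    have : (k:ℝ) < n := by exact_mod_cast hkn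
    linarith
  rw [ratio_eq' n j k hkj hjn]
  have hpow : ((j : ℝ) / n) ^ k = ∏ _i ∈ range k, ((j : ℝ) / n) := by
    rw [prod_const, card_range]
  rw [hpow]
  have ha : ∀ i ∈ range k, ((j - i : ℕ) : ℝ) / ((n - i : ℕ) : ℝ) ∈ Set.Icc (0:ℝ) 1 := by
    intro i hi
    have hi' : i < k := mem_range.mp hi
    have hni : 0 < n - i := by omega
    constructor
    · positivity
    · rw [div_le_one (by exact_mod_cast hni)]
      exact_mod_cast Nat.sub_le_sub_right hjn i
  have hb : ∀ i ∈ range k, (j : ℝ) / n ∈ Set.Icc (0:ℝ) 1 := by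
    intro i _
    exact ⟨by positivity, by rw [div_le_one hn]; exact_mod_cast hjn⟩
  calc |∏ i ∈ range k, (((j - i : ℕ) : ℝ) / ((n - i : ℕ) : ℝ)) - ∏ _i ∈ range k, ((j:ℝ)/n)|
      ≤ ∑ i ∈ range k, |(((j - i : ℕ) : ℝ) / ((n - i : ℕ) : ℝ)) - (j:ℝ)/n| :=
        abs_prod_sub_prod_le' _ _ _ ha hb
    _ ≤ ∑ _i ∈ range k, (k : ℝ) / ((n:ℝ) - k) := by
        refine sum_le_sum ?_
        intro i hi
        have hi' : i < k := mem_range.mp hi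
        have hij : (i:ℝ) ≤ j := by exact_mod_cast (hi'.le.trans hkj)
        have hin : (i:ℝ) < n := by exact_mod_cast hi'.trans hkn
        have hcj : ((j - i : ℕ) : ℝ) = (j:ℝ) - i := by
          rw [Nat.cast_sub (hi'.le.trans hkj)]
        have hcn : ((n - i : ℕ) : ℝ) = (n:ℝ) - i := by
          rw [Nat.cast_sub (hi'.trans hkn).le]
        rw [hcj, hcn]
        have hni : (0:ℝ) < (n:ℝ) - i := by linarith
        have hd : ((j:ℝ) - i) / ((n:ℝ) - i) - (j:ℝ)/n
            = ((i:ℝ) * ((j:ℝ) - n)) / (((n:ℝ) - i) * n) := by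
          field_simp
          ring
        rw [hd, abs_div, abs_mul]
        have hjn' : (j:ℝ) ≤ n := by exact_mod_cast hjn
        rw [abs_of_nonneg (Nat.cast_nonneg i), abs_of_nonpos (by linarith : (j:ℝ) - n ≤ 0),
          abs_of_pos (by positivity : (0:ℝ) < ((n:ℝ) - i) * n)]
        rw [div_le_div_iff₀ (by positivity) hnk]
        have h1 : (i:ℝ) ≤ k := by exact_mod_cast hi'.le
        have h2 : (n:ℝ) - k ≤ (n:ℝ) - i := by linarith
        have hi0 : (0:ℝ) ≤ i := Nat.cast_nonneg i
        have e1 : (i:ℝ) * ((n:ℝ) - j) ≤ (k:ℝ) * n :=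
          mul_le_mul h1 (by linarith) (by linarith) (by positivity)
        have e2 : ((i:ℝ) * ((n:ℝ) - j)) * ((n:ℝ) - k) ≤ ((k:ℝ) * n) * ((n:ℝ) - i) :=
          mul_le_mul e1 h2 hnk.le (by positivity)
        nlinarith [e2]
    _ = (k ^ 2 : ℝ) / ((n : ℝ) - k) := by
        rw [sum_const, card_range, nsmul_eq_mul]
        ring

/-- If `F n : {0,…,n} → ℂ` has uniformly bounded ℓ¹ norm `B`, and for each fixed `k`
the hypergeometric-weighted sums `∑_{j=k}^n F n j · C(n-k, j-k)/C(n, j)` converge to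
`c p^k` with `p ∈ [0,1]`, then for each `k` the monomial-weighted sums
`∑_{j=0}^n F n j (j/n)^k` also converge to `c p^k`. -/
theorem stmt_3 (F : ℕ → ℕ → ℂ) (B : ℝ) (c : ℂ) (p : ℝ)
    (hp : p ∈ Set.Icc (0 : ℝ) 1)
    (hB : ∀ n, ∑ j ∈ range (n + 1), ‖F n j‖ ≤ B)
    (hhyp : ∀ k : ℕ,
      Tendsto (fun n => ∑ j ∈ Icc k n,
          F n j * (((n - k).choose (j - k) : ℂ) / (n.choose j : ℂ)))
        atTop (𝓝 (c * (p : ℂ) ^ k))) :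
    ∀ k : ℕ,
      Tendsto (fun n => ∑ j ∈ range (n + 1), F n j * (((j : ℂ)) / n) ^ k)
        atTop (𝓝 (c * (p : ℂ) ^ k)) := by
  intro k
  have hB0 : 0 ≤ B := le_trans (by positivity) (hB 0)
  have hdiff : Tendsto (fun n => (∑ j ∈ range (n + 1), F n j * (((j : ℂ)) / n) ^ k)
      - ∑ j ∈ Icc k n, F n j * (((n - k).choose (j - k) : ℂ) / (n.choose j : ℂ)))
      atTop (𝓝 0) := by
    have hbound : Tendsto (fun n : ℕ => B * ((k:ℝ)^2 + k) * ((n:ℝ) - k)⁻¹) atTop (𝓝 0) := by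
      have h1 : Tendsto (fun n : ℕ => (n:ℝ) - k) atTop atTop := by
        simpa [sub_eq_add_neg] using
          tendsto_atTop_add_const_right atTop (-(k:ℝ)) tendsto_natCast_atTop_atTop
      simpa using (h1.inv_tendsto_atTop).const_mul (B * ((k:ℝ)^2 + k))
    refine squeeze_zero_norm' ?_ hbound
    filter_upwards [eventually_gt_atTop k] with n hn
    have hn0 : 0 < n := Nat.lt_of_le_of_lt (Nat.zero_le k) hn
    have hnR : (0:ℝ) < n := by exact_mod_cast hn0
    have hnk : (0:ℝ) < (n:ℝ) - k := by
      have : (k:ℝ) < n := by exact_mod_cast hn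
      linarith
    set Mb : ℝ := ((k:ℝ)^2 + k) * ((n:ℝ) - k)⁻¹ with hMb
    have hMb0 : 0 ≤ Mb := by positivity
    -- split the range sum
    have hsplit : ∑ j ∈ range (n + 1), F n j * (((j : ℂ)) / n) ^ k
        = (∑ j ∈ range k, F n j * (((j : ℂ)) / n) ^ k)
          + ∑ j ∈ Icc k n, F n j * (((j : ℂ)) / n) ^ k := by
      rw [range_eq_Ico, ← sum_Ico_consecutive _ (Nat.zero_le k) (by omega : k ≤ n + 1),
        ← range_eq_Ico, Finset.Ico_add_one_right_eq_Icc]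
    have hD : (∑ j ∈ range (n + 1), F n j * (((j : ℂ)) / n) ^ k)
        - (∑ j ∈ Icc k n, F n j * (((n - k).choose (j - k) : ℂ) / (n.choose j : ℂ)))
        = (∑ j ∈ range k, F n j * (((j : ℂ)) / n) ^ k)
          + ∑ j ∈ Icc k n, F n j * ((((j : ℂ)) / n) ^ k
              - (((n - k).choose (j - k) : ℂ) / (n.choose j : ℂ))) := by
      rw [hsplit, add_sub_assoc, ← sum_sub_distrib]
      simp_rw [mul_sub]
    rw [hD]
    -- bound each coefficient by Mb
    have hcoef1 : ∀ j ∈ range k, ‖(((j : ℂ)) / n) ^ k‖ ≤ Mb := by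
      intro j hj
      have hjk : j < k := mem_range.mp hj
      have hk1 : 1 ≤ k := by omega
      have hjn : (j:ℝ) ≤ n := by exact_mod_cast (le_of_lt (hjk.trans hn))
      have hnorm : ‖(((j : ℂ)) / n) ^ k‖ = ((j:ℝ)/n) ^ k := by
        rw [norm_pow, norm_div, Complex.norm_natCast, Complex.norm_natCast]
      rw [hnorm]
      have h1 : ((j:ℝ)/n) ^ k ≤ ((j:ℝ)/n) ^ 1 :=
        pow_le_pow_of_le_one (by positivity) (by rw [div_le_one hnR]; exact hjn) hk1
      rw [pow_one] at h1
      have h2 : (j:ℝ)/n ≤ (k:ℝ)/((n:ℝ) - k) := by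
        rw [div_le_div_iff₀ hnR hnk]
        have hjk' : (j:ℝ) ≤ k := by exact_mod_cast hjk.le
        nlinarith [(Nat.cast_nonneg j : (0:ℝ) ≤ j), (Nat.cast_nonneg k : (0:ℝ) ≤ k), hjn]
      have h3 : (k:ℝ)/((n:ℝ) - k) ≤ Mb := by
        rw [hMb, div_eq_mul_inv]
        have : (k:ℝ) ≤ (k:ℝ)^2 + k := by nlinarith [(Nat.cast_nonneg k : (0:ℝ) ≤ k)]
        exact mul_le_mul_of_nonneg_right this (by positivity)
      linarith
    have hcoef2 : ∀ j ∈ Icc k n,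
        ‖(((j : ℂ)) / n) ^ k - (((n - k).choose (j - k) : ℂ) / (n.choose j : ℂ))‖ ≤ Mb := by
      intro j hj
      obtain ⟨hkj, hjn⟩ := mem_Icc.mp hj
      have hcast : (((j : ℂ)) / n) ^ k - (((n - k).choose (j - k) : ℂ) / (n.choose j : ℂ))
          = ((((j:ℝ)/n) ^ k - ((n - k).choose (j - k) : ℝ) / (n.choose j : ℝ) : ℝ) : ℂ) := by
        push_cast
        ring
      rw [hcast, Complex.norm_real, Real.norm_eq_abs, abs_sub_comm]
      have hest := est n j k hkj hjn hn
      have h3 : (k:ℝ)^2/((n:ℝ) - k) ≤ Mb := by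
        rw [hMb, div_eq_mul_inv]
        have hkk : (k:ℝ)^2 ≤ (k:ℝ)^2 + k := by
          have : (0:ℝ) ≤ k := Nat.cast_nonneg k
          linarith
        exact mul_le_mul_of_nonneg_right hkk (by positivity)
      linarith
    calc ‖(∑ j ∈ range k, F n j * (((j : ℂ)) / n) ^ k)
          + ∑ j ∈ Icc k n, F n j * ((((j : ℂ)) / n) ^ k
              - (((n - k).choose (j - k) : ℂ) / (n.choose j : ℂ)))‖
        ≤ (∑ j ∈ range k, ‖F n j‖ * Mb) + ∑ j ∈ Icc k n, ‖F n j‖ * Mb := by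
          refine le_trans (norm_add_le _ _) (add_le_add ?_ ?_)
          · refine le_trans (norm_sum_le _ _) (sum_le_sum ?_)
            intro j hj
            rw [norm_mul]
            exact mul_le_mul_of_nonneg_left (hcoef1 j hj) (norm_nonneg _)
          · refine le_trans (norm_sum_le _ _) (sum_le_sum ?_)
            intro j hj
            rw [norm_mul]
            exact mul_le_mul_of_nonneg_left (hcoef2 j hj) (norm_nonneg _)
      _ = (∑ j ∈ range (n + 1), ‖F n j‖) * Mb := by
          rw [← sum_mul, ← sum_mul, ← add_mul]
          congr 1
          rw [range_eq_Ico (n + 1), ← sum_Ico_consecutive _ (Nat.zero_le k) (by omega : k ≤ n + 1),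
            ← range_eq_Ico, Finset.Ico_add_one_right_eq_Icc]
      _ ≤ B * ((k:ℝ)^2 + k) * ((n:ℝ) - k)⁻¹ := by
          rw [hMb, ← mul_assoc]
          have hsum : ∑ j ∈ range (n + 1), ‖F n j‖ ≤ B := by
            simpa using hB n
          exact mul_le_mul_of_nonneg_right
            (mul_le_mul_of_nonneg_right hsum (by positivity)) (by positivity)
  have hfin := hdiff.add (hhyp k)
  rw [zero_add] at hfin
  have heq : (fun n => (∑ j ∈ range (n + 1), F n j * (((j : ℂ)) / n) ^ k
      - ∑ j ∈ Icc k n, F n j * (((n - k).choose (j - k) : ℂ) / (n.choose j : ℂ)))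
      + ∑ j ∈ Icc k n, F n j * (((n - k).choose (j - k) : ℂ) / (n.choose j : ℂ)))
      = fun n => ∑ j ∈ range (n + 1), F n j * (((j : ℂ)) / n) ^ k := by
    funext n
    ring
  rwa [heq] at hfin
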